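/- Given Condorcet's model with m ≥ 2 alternatives and n ≥ 2 i.i.d. samples, an alternative a ∈ 𝒜, and a nonempty set H₁ ⊆ ℬ(𝒜)∖R_{a≻others}: there exists a level-α UMP test for H₀ = R_{a≻others} vs H₁ for every 0<α<1 if and only if there exists B ⊆ 𝒜∖{a} such that H₁ ⊆ R_{B≻a}. Moreover, when H₁ ⊆ R_{B≻a}, for every 0<α<1 there exist K ∈ ℝ and Γ ∈ [0,1] such that the test g defined by g(P)=1 if w_P(B≻a)>K, g(P)=0 if w_P(B≻a)<K, and g(P)=Γ if w_P(B≻a)=K is a level-α UMP test for H₀ vs H₁. -/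

import Mathlib

namespace Voting

open Finset

section Generic

variable {S Θ : Type*} [Fintype S] [Fintype Θ]

/-- `Size π f θ` : the probability that test `f` rejects when the ground truth is `θ`. -/
noncomputable def Size (π : Θ → S → ℝ) (f : S → ℝ) (θ : Θ) : ℝ :=
  ∑ P, π θ P * f P

/-- `Power π f θ` : the power of test `f` at parameter `θ`. -/
noncomputable def Power (π : Θ → S → ℝ) (f : S → ℝ) (θ : Θ) : ℝ :=
  ∑ P, π θ P * f P

/-- A (randomized) test is a critical function with values in `[0,1]`. -/
def IsTest (f : S → ℝ) : Prop := ∀ P, 0 ≤ f P ∧ f P ≤ 1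

/-- `Size(f) ≤ α` over the null hypothesis `H0`. -/
def SizeLe (π : Θ → S → ℝ) (H0 : Set Θ) (f : S → ℝ) (α : ℝ) : Prop :=
  ∀ h0 ∈ H0, Size π f h0 ≤ α

/-- `Size(f) = α` over the null hypothesis `H0` (the max over `H0` equals `α`). -/
def SizeEq (π : Θ → S → ℝ) (H0 : Set Θ) (f : S → ℝ) (α : ℝ) : Prop :=
  SizeLe π H0 f α ∧ ∃ h0 ∈ H0, Size π f h0 = α

/-- `f` is a level-`α` most powerful test for `H0` vs the simple alternative `h1`. -/
def IsMostPowerful (π : Θ → S → ℝ) (H0 : Set Θ) (h1 : Θ) (α : ℝ) (f : S → ℝ) : Prop :=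
  IsTest f ∧ SizeLe π H0 f α ∧
    ∀ g : S → ℝ, IsTest g → SizeLe π H0 g α → Power π g h1 ≤ Power π f h1

/-- `f` is a level-`α` uniformly most powerful test for `H0` vs `H1`. -/
def IsUMP (π : Θ → S → ℝ) (H0 H1 : Set Θ) (α : ℝ) (f : S → ℝ) : Prop :=
  ∀ h1 ∈ H1, IsMostPowerful π H0 h1 α f

end Generic

/-- An irreflexive, antisymmetric, total binary relation on `Fin m`. -/
abbrev IsTournament {m : ℕ} (R : Fin m → Fin m → Bool) : Prop :=
  ∀ a b : Fin m, (a = b → R a b = false) ∧ (a ≠ b → R a b = !R b a)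

/-- `ℬ(𝒜)` : the set of irreflexive, antisymmetric, total binary relations on `Fin m`;
`R.1 a b = true` means `a ≻_R b`. -/
abbrev Tournament (m : ℕ) := {R : Fin m → Fin m → Bool // IsTournament R}

/-- Kendall-tau distance on binary relations. -/
def KTt {m : ℕ} (V W : Tournament m) : ℕ :=
  (Finset.univ.filter
    (fun p : Fin m × Fin m => V.1 p.1 p.2 = true ∧ W.1 p.2 p.1 = true)).card

/-- Condorcet single-sample probability of `V` given ground truth `W` and dispersion `φ`. -/
noncomputable def condorcet1 {m : ℕ} (φ : ℝ) (W V : Tournament m) : ℝ :=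
  φ ^ KTt V W / ∑ U : Tournament m, φ ^ KTt U W

/-- Condorcet's model with `n` i.i.d. samples. -/
noncomputable def condorcet {m : ℕ} (φ : ℝ) (n : ℕ) :
    Tournament m → (Fin n → Tournament m) → ℝ :=
  fun W P => ∏ i, condorcet1 φ W (P i)

/-- `R_{a≻others}` : binary relations in which `a` is preferred to all other alternatives. -/
def Rtop {m : ℕ} (a : Fin m) : Set (Tournament m) :=
  {V | ∀ b, b ≠ a → V.1 a b = true}

/-- `w_P(b≻a)` for a profile of binary relations. -/
def wpairT {m n : ℕ} (P : Fin n → Tournament m) (b a : Fin m) : ℤ :=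
  ((Finset.univ.filter (fun i => (P i).1 b a = true)).card : ℤ) -
    ((Finset.univ.filter (fun i => (P i).1 a b = true)).card : ℤ)

/-- `w_P(B≻a) = Σ_{b∈B} w_P(b≻a)`. -/
def wsetT {m n : ℕ} (P : Fin n → Tournament m) (B : Finset (Fin m)) (a : Fin m) : ℤ :=
  ∑ b ∈ B, wpairT P b a

/-- The threshold test on the statistic `w_P(B≻a)` for Condorcet's model. -/
noncomputable def wTestT {m : ℕ} (n : ℕ) (B : Finset (Fin m)) (a : Fin m) (K Γ : ℝ) :
    (Fin n → Tournament m) → ℝ :=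
  fun P =>
    if K < ((wsetT P B a : ℤ) : ℝ) then 1
    else if ((wsetT P B a : ℤ) : ℝ) < K then 0
    else Γ


/-- `R_{B≻a}` : binary relations in which the set of alternatives preferred to `a` is
exactly `B`. -/
def RBset {m : ℕ} (B : Finset (Fin m)) (a : Fin m) : Set (Tournament m) :=
  {V | Finset.univ.filter (fun b => V.1 b a = true) = B}





section AuxKT
variable {m : ℕ}

lemma t_irrefl (V : Tournament m) (x : Fin m) : V.1 x x = false := (V.2 x x).1 rfl

lemma t_anti (V : Tournament m) {x y : Fin m} (h : x ≠ y) : V.1 x y = !V.1 y x :=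
  (V.2 x y).2 h

/-- sorted pairs -/
abbrev Pr (m : ℕ) := {p : Fin m × Fin m // p.1 < p.2}

/-- disagreement indicator on a pair -/
def dis (U V : Tournament m) (p : Pr m) : ℕ :=
  if U.1 p.1.1 p.1.2 = V.1 p.1.1 p.1.2 then 0 else 1

lemma KTt_eq_sum (U V : Tournament m) : KTt U V = ∑ p : Pr m, dis U V p := by
  classical
  have hcard : KTt U V = ∑ p : Fin m × Fin m,
      (if U.1 p.1 p.2 = true ∧ V.1 p.2 p.1 = true then 1 else 0) := by
    rw [KTt, Finset.card_filter]
  set F : Fin m × Fin m → ℕ :=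
    fun p => if U.1 p.1 p.2 = true ∧ V.1 p.2 p.1 = true then 1 else 0 with hF
  have hsplit : ∑ p : Fin m × Fin m, F p =
      ∑ p ∈ univ.filter (fun p : Fin m × Fin m => p.1 < p.2), F p +
      ∑ p ∈ univ.filter (fun p : Fin m × Fin m => ¬ p.1 < p.2), F p :=
    (Finset.sum_filter_add_sum_filter_not _ _ _).symm
  have hstep : ∑ p ∈ univ.filter (fun p : Fin m × Fin m => ¬ p.1 < p.2), F p =
      ∑ p ∈ univ.filter (fun p : Fin m × Fin m => p.2 < p.1), F p := by
    refine (Finset.sum_subset ?_ ?_).symm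
    · intro p hp
      simp only [mem_filter, mem_univ, true_and] at hp ⊢
      exact asymm hp
    · intro p hp hnp
      simp only [mem_filter, mem_univ, true_and] at hp hnp
      have : p.1 = p.2 := le_antisymm (not_lt.mp hnp) (not_lt.mp hp)
      simp [hF, this, t_irrefl]
  have hswap : ∑ p ∈ univ.filter (fun p : Fin m × Fin m => p.2 < p.1), F p =
      ∑ p ∈ univ.filter (fun p : Fin m × Fin m => p.1 < p.2), F p.swap := by
    refine Finset.sum_nbij' (fun p => p.swap) (fun p => p.swap) ?_ ?_ ?_ ?_ ?_ <;>
      simp [Prod.swap]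
  have hpair : ∀ p : Fin m × Fin m, p.1 < p.2 →
      F p + F p.swap = if U.1 p.1 p.2 = V.1 p.1 p.2 then 0 else 1 := by
    rintro ⟨x, y⟩ hlt
    have hxy : x ≠ y := ne_of_lt hlt
    have h1 : U.1 y x = !U.1 x y := t_anti U hxy.symm
    have h2 : V.1 y x = !V.1 x y := t_anti V hxy.symm
    simp only [hF, Prod.swap]
    rw [h1, h2]
    cases U.1 x y <;> cases V.1 x y <;> simp
  have hfin : ∑ p ∈ univ.filter (fun p : Fin m × Fin m => p.1 < p.2),
      (F p + F p.swap) = ∑ p : Pr m, dis U V p := by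
    rw [Finset.sum_subtype (p := fun p : Fin m × Fin m => p.1 < p.2)
      (univ.filter (fun p : Fin m × Fin m => p.1 < p.2))
      (by intro x; simp) (fun p => F p + F p.swap)]
    refine Finset.sum_congr rfl ?_
    rintro ⟨p, hp⟩ _
    rw [hpair p hp]; rfl
  rw [hcard]
  calc ∑ p : Fin m × Fin m, F p
      = ∑ p ∈ univ.filter (fun p : Fin m × Fin m => p.1 < p.2), (F p + F p.swap) := by
        rw [Finset.sum_add_distrib, ← hswap, ← hstep, ← hsplit]
    _ = ∑ p : Pr m, dis U V p := hfin

end AuxKT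

section AuxZ
variable {m : ℕ}
/-- build a tournament from values on sorted pairs -/
def mkT (g : Fin m → Fin m → Bool) : Tournament m :=
  ⟨fun x y => if x < y then g x y else if y < x then !g y x else false, by
    intro x y
    constructor
    · rintro rfl; simp
    · intro hxy
      rcases lt_or_gt_of_ne hxy with h | h
      · simp [h, asymm h, not_lt_of_gt h]
      · simp [h, asymm h, not_lt_of_gt h]⟩

instance : Inhabited (Tournament m) := ⟨mkT fun _ _ => false⟩

/-- tournaments as bit functions on sorted pairs -/
def eT : Tournament m ≃ (Pr m → Bool) where
  toFun V p := V.1 p.1.1 p.1.2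
  invFun g := mkT (fun x y => if h : x < y then g ⟨(x, y), h⟩ else false)
  left_inv V := by
    apply Subtype.ext
    funext x y
    show (if x < y then _ else _) = _
    rcases lt_trichotomy x y with h | h | h
    · simp [h]
    · simp [h, t_irrefl]
    · simp only [asymm h, if_false, h, if_true]
      rw [t_anti V (ne_of_gt h)]; simp
  right_inv g := by
    funext p
    show (if p.1.1 < p.1.2 then _ else _) = _
    simp [p.2]

lemma eT_apply (V : Tournament m) (p : Pr m) : eT V p = V.1 p.1.1 p.1.2 := rfl

lemma dis_eq (U V : Tournament m) (p : Pr m) :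
    dis U V p = if eT U p = eT V p then 0 else 1 := rfl

def Zc (φ : ℝ) (W : Tournament m) : ℝ := ∑ U : Tournament m, φ ^ KTt U W

lemma Zc_const (φ : ℝ) (W W' : Tournament m) : Zc φ W = Zc φ W' := by
  classical
  suffices h : ∀ W : Tournament m,
      Zc φ W = ∑ g : Pr m → Bool, φ ^ (∑ p : Pr m, if g p then 1 else 0 : ℕ) by
    rw [h W, h W']
  intro W
  have h1 : Zc φ W = ∑ g : Pr m → Bool, φ ^ KTt (eT.symm g) W :=
    (Equiv.sum_comp eT.symm (fun U => φ ^ KTt U W)).symm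
  rw [h1]
  have h2 : ∀ g : Pr m → Bool,
      KTt (eT.symm g) W = ∑ p : Pr m, if g p = eT W p then 0 else 1 := by
    intro g
    rw [KTt_eq_sum]
    refine Finset.sum_congr rfl fun p _ => ?_
    rw [dis_eq]
    have : eT (eT.symm g) = g := eT.apply_symm_apply g
    rw [this]
  simp_rw [h2]
  -- reindex by xor with eT W
  have hinv : Function.Involutive (fun g : Pr m → Bool => fun p => xor (g p) (eT W p)) := by
    intro g; funext p; simp [Bool.xor_assoc]
  rw [← Equiv.sum_comp hinv.toPerm
    (fun g : Pr m → Bool => φ ^ (∑ p : Pr m, if g p = eT W p then 0 else 1 : ℕ))]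
  refine Finset.sum_congr rfl fun g _ => ?_
  congr 1
  refine Finset.sum_congr rfl fun p _ => ?_
  show (if xor (g p) (eT W p) = eT W p then 0 else 1) = _
  cases g p <;> cases eT W p <;> rfl

lemma Zc_pos {φ : ℝ} (hφ : 0 < φ) (W : Tournament m) : 0 < Zc φ W :=
  Finset.sum_pos (fun U _ => pow_pos hφ _) univ_nonempty

end AuxZ

set_option maxHeartbeats 1000000
section
variable {m : ℕ} {n : ℕ}

/-- `a` beats everyone, other pairs as in `V`. -/
def topify (a : Fin m) (V : Tournament m) : Tournament m :=
  ⟨fun x y => if x = a then decide (y ≠ a) else if y = a then false else V.1 x y, by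
    intro x y
    constructor
    · rintro rfl
      by_cases h : x = a <;> simp [h, t_irrefl]
    · intro hxy
      by_cases hx : x = a
      · subst hx
        have hy : y ≠ x := fun h => hxy (h ▸ rfl)
        simp [hxy.symm, hy]
      · by_cases hy : y = a
        · subst hy; simp [hx]
        · simp [hx, hy, t_anti V hxy]⟩

lemma topify_mem (a : Fin m) (V : Tournament m) : topify a V ∈ Rtop a := by
  intro b hb
  show (if a = a then _ else _) = _
  simp [hb]

lemma topify_off (a : Fin m) (V : Tournament m) {x y : Fin m} (hx : x ≠ a) (hy : y ≠ a) :
    (topify a V).1 x y = V.1 x y := by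
  show (if x = a then _ else _) = _
  simp [hx, hy]

lemma topify_ab (a : Fin m) (V : Tournament m) {b : Fin m} (hb : b ≠ a) :
    (topify a V).1 a b = true := topify_mem a V b hb

lemma topify_ba (a : Fin m) (V : Tournament m) {b : Fin m} (hb : b ≠ a) :
    (topify a V).1 b a = false := by
  rw [t_anti (topify a V) hb, topify_ab a V hb]; rfl

lemma notmem_of_filter {a : Fin m} {B : Finset (Fin m)} {V : Tournament m}
    (hB : Finset.univ.filter (fun b => V.1 b a = true) = B) : a ∉ B := by
  rw [← hB]
  simp [t_irrefl]

lemma bool_eq_true_of_ne_false {b : Bool} (h : b ≠ false) : b = true := by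
  cases b <;> simp_all

/-- Kendall-tau decomposition against the topified tournament. -/
lemma kt_decomp (a : Fin m) (V : Tournament m) (B : Finset (Fin m))
    (hB : Finset.univ.filter (fun b => V.1 b a = true) = B) (U : Tournament m) :
    (KTt U V : ℤ) = (KTt U (topify a V) : ℤ) +
      ∑ b ∈ B, ((if U.1 a b = true then (1 : ℤ) else 0) -
                (if U.1 b a = true then (1 : ℤ) else 0)) := by
  classical
  have haB : a ∉ B := notmem_of_filter hB
  have hmem : ∀ b, b ∈ B ↔ V.1 b a = true := by
    intro b; rw [← hB]; simp
  set W : Tournament m := topify a V with hW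
  set G : Fin m → ℤ := fun b => (if U.1 a b = true then (1 : ℤ) else 0) -
      (if U.1 b a = true then (1 : ℤ) else 0) with hG
  rw [KTt_eq_sum U V, KTt_eq_sum U W]
  push_cast
  rw [← sub_eq_iff_eq_add']
  rw [← Finset.sum_sub_distrib]
  set D : Pr m → ℤ := fun p => (dis U V p : ℤ) - (dis U W p : ℤ) with hD
  set rel : Pr m → Prop := fun p => (p.1.1 = a ∧ p.1.2 ∈ B) ∨ (p.1.2 = a ∧ p.1.1 ∈ B)
    with hrel
  have hVmem : ∀ {b}, b ∈ B → V.1 b a = true := fun h => (hmem _).mp h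
  have hVnot : ∀ {b}, b ≠ a → b ∉ B → V.1 b a = false := by
    intro b hba h
    by_contra hc
    exact h ((hmem b).mpr (bool_eq_true_of_ne_false hc))
  have hzero : ∀ p ∈ Finset.univ, D p ≠ 0 → rel p := by
    rintro ⟨⟨x, y⟩, hlt⟩ - hne
    have hxy : x ≠ y := ne_of_lt hlt
    by_contra hcon
    have hc1 : x = a → y ∉ B := fun h1 h2 => hcon (Or.inl ⟨h1, h2⟩)
    have hc2 : y = a → x ∉ B := fun h1 h2 => hcon (Or.inr ⟨h1, h2⟩)
    apply hne
    have hVW : V.1 x y = W.1 x y := by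
      by_cases hx : x = a
      · subst hx
        have hy : y ≠ x := hxy.symm
        have hyB : y ∉ B := hc1 rfl
        have h1 : V.1 y x = false := hVnot hy hyB
        rw [t_anti V hxy, h1, hW, topify_ab _ V hy]
        rfl
      · by_cases hy : y = a
        · subst hy
          have hxB : x ∉ B := hc2 rfl
          rw [hVnot hx hxB, hW, topify_ba _ V hx]
        · rw [hW, topify_off a V hx hy]
    simp [hD, dis, hVW]
  rw [← Finset.sum_filter_of_ne hzero]
  refine Finset.sum_bij' (i := fun (p : Pr m) _ => if p.1.1 = a then p.1.2 else p.1.1)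
    (j := fun b hb => ⟨if a < b then (a, b) else (b, a), ?_⟩) ?_ ?_ ?_ ?_ ?_
  · -- j lands in Pr m
    by_cases h : a < b
    · simpa [h] using h
    · have hba : b ≠ a := fun hh => haB (hh ▸ hb)
      have : b < a := lt_of_le_of_ne (not_lt.mp h) hba
      simpa [h] using this
  · -- i maps into B
    rintro ⟨⟨x, y⟩, hlt⟩ hp
    simp only [Finset.mem_filter, Finset.mem_univ, true_and, hrel] at hp
    rcases hp with ⟨h1, h2⟩ | ⟨h1, h2⟩
    · simpa [h1] using h2
    · have hx : x ≠ a := fun hh => haB (hh ▸ h2)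
      simpa [hx] using h2
  · -- j maps into filter
    intro b hb
    have hba : b ≠ a := fun hh => haB (hh ▸ hb)
    simp only [Finset.mem_filter, Finset.mem_univ, true_and, hrel]
    by_cases h : a < b
    · left; constructor <;> simp [h, hb]
    · right; constructor <;> simp [h, hb]
  · -- left inverse
    rintro ⟨⟨x, y⟩, hlt⟩ hp
    simp only [Finset.mem_filter, Finset.mem_univ, true_and, hrel] at hp
    rcases hp with ⟨h1, h2⟩ | ⟨h1, h2⟩
    · have : x = a := h1
      subst this
      have : x < y := hlt
      simp [this]
    · have : y = a := h1
      subst this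
      have hxa : x < y := hlt
      simp [ne_of_lt hxa, asymm hxa]
  · -- right inverse
    intro b hb
    have hba : b ≠ a := fun hh => haB (hh ▸ hb)
    by_cases h : a < b <;> simp +contextual [h, eq_comm]
  · -- values agree
    rintro ⟨⟨x, y⟩, hlt⟩ hp
    simp only [Finset.mem_filter, Finset.mem_univ, true_and, hrel] at hp
    have hxy : x ≠ y := ne_of_lt hlt
    rcases hp with ⟨h1, h2⟩ | ⟨h1, h2⟩
    · subst h1
      have hy : y ≠ x := hxy.symm
      have hVya : V.1 y x = true := hVmem h2
      have hVxy : V.1 x y = false := by rw [t_anti V hxy, hVya]; rfl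
      have hWxy : W.1 x y = true := topify_ab _ V hy
      have hU : U.1 y x = !U.1 x y := t_anti U hy
      simp only [hD, dis, hG, hVxy, hWxy, if_pos rfl, hU]
      cases hU2 : U.1 x y <;> simp [hU, hU2]
    · subst h1
      have hx : x ≠ y := hxy
      have hVxy : V.1 x y = true := hVmem h2
      have hWxy : W.1 x y = false := topify_ba _ V hx
      have hU : U.1 y x = !U.1 x y := t_anti U hxy.symm
      have hred : (if x = y then y else x) = x := if_neg hxy
      simp only [hD, dis, hG, hVxy, hWxy, if_pos rfl, hU, hred]
      cases hU2 : U.1 x y <;> simp [hU, hU2]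
end
section
variable {m n : ℕ}

lemma condorcet1_pos {φ : ℝ} (hφ : 0 < φ) (W V : Tournament m) :
    0 < condorcet1 φ W V :=
  div_pos (pow_pos hφ _) (Zc_pos hφ W)

lemma condorcet_pos {φ : ℝ} (hφ : 0 < φ) (W : Tournament m) (P : Fin n → Tournament m) :
    0 < condorcet φ n W P :=
  Finset.prod_pos fun i _ => condorcet1_pos hφ W (P i)

lemma sum_condorcet1 {φ : ℝ} (hφ : 0 < φ) (W : Tournament m) :
    ∑ V : Tournament m, condorcet1 φ W V = 1 := by
  simp only [condorcet1]
  rw [← Finset.sum_div]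
  exact div_self (Zc_pos hφ W).ne'

lemma sum_condorcet {φ : ℝ} (hφ : 0 < φ) (W : Tournament m) :
    ∑ P : Fin n → Tournament m, condorcet φ n W P = 1 := by
  show ∑ P : Fin n → Tournament m, ∏ i, condorcet1 φ W (P i) = 1
  rw [← Fintype.piFinset_univ, ← Finset.prod_univ_sum]
  simp [sum_condorcet1 hφ W]

/-- the likelihood ratio identity -/
lemma cond_ratio {φ : ℝ} (hφ : 0 < φ) (a : Fin m) (V : Tournament m) (B : Finset (Fin m))
    (hB : Finset.univ.filter (fun b => V.1 b a = true) = B) (P : Fin n → Tournament m) :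
    condorcet φ n V P = φ ^ (-(wsetT P B a)) * condorcet φ n (topify a V) P := by
  classical
  have hφ' : φ ≠ 0 := hφ.ne'
  set W : Tournament m := topify a V with hW
  have hprod : ∀ W' : Tournament m, condorcet φ n W' P
      = φ ^ ((∑ i, (KTt (P i) W' : ℤ))) / (Zc φ V) ^ n := by
    intro W'
    show (∏ i, (φ ^ KTt (P i) W' / Zc φ W')) = _
    rw [Zc_const φ W' V]
    rw [Finset.prod_div_distrib, Finset.prod_const, Finset.card_univ, Fintype.card_fin,
      Finset.prod_pow_eq_pow_sum]
    congr 1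
    rw [← zpow_natCast]
    congr 1
    push_cast
    rfl
  have hsum : (∑ i, (KTt (P i) V : ℤ)) = (∑ i, (KTt (P i) W : ℤ)) - wsetT P B a := by
    have h1 : ∀ i, (KTt (P i) V : ℤ) = (KTt (P i) W : ℤ) +
        ∑ b ∈ B, ((if (P i).1 a b = true then (1 : ℤ) else 0) -
                  (if (P i).1 b a = true then (1 : ℤ) else 0)) :=
      fun i => kt_decomp a V B hB (P i)
    simp_rw [h1]
    rw [Finset.sum_add_distrib, Finset.sum_comm]
    rw [sub_eq_add_neg]
    congr 1
    rw [wsetT, ← Finset.sum_neg_distrib]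
    refine Finset.sum_congr rfl fun b _ => ?_
    rw [wpairT]
    rw [Finset.sum_sub_distrib]
    rw [Finset.sum_boole, Finset.sum_boole]
    push_cast
    ring
  rw [hprod V, hprod W, hsum, zpow_sub₀ hφ', zpow_neg]
  ring

/-- the xor-symmetry tournament -/
def sigmaT (W W' U : Tournament m) : Tournament m :=
  ⟨fun x y => xor (U.1 x y) (xor (W.1 x y) (W'.1 x y)), by
    intro x y
    constructor
    · rintro rfl; simp [t_irrefl]
    · intro hxy
      show (U.1 x y ^^ (W.1 x y ^^ W'.1 x y)) = !(U.1 y x ^^ (W.1 y x ^^ W'.1 y x))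
      rw [t_anti U hxy, t_anti W hxy, t_anti W' hxy]
      cases U.1 y x <;> cases W.1 y x <;> cases W'.1 y x <;> rfl⟩

lemma sigmaT_invol (W W' : Tournament m) : Function.Involutive (sigmaT W W') := by
  intro U
  apply Subtype.ext
  funext x y
  show xor (xor (U.1 x y) _) _ = _
  cases U.1 x y <;> cases W.1 x y <;> cases W'.1 x y <;> rfl

lemma sigmaT_apply (W W' U : Tournament m) (x y : Fin m) :
    (sigmaT W W' U).1 x y = xor (U.1 x y) (xor (W.1 x y) (W'.1 x y)) := rfl

lemma kt_sigmaT (W W' U : Tournament m) : KTt (sigmaT W W' U) W' = KTt U W := by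
  rw [KTt_eq_sum, KTt_eq_sum]
  refine Finset.sum_congr rfl fun p _ => ?_
  simp only [dis, sigmaT_apply]
  have : ∀ u w w' : Bool, (if (xor u (xor w w')) = w' then (0:ℕ) else 1) =
      (if u = w then 0 else 1) := by decide
  exact this _ _ _

lemma sigmaT_bits {a : Fin m} {W W' : Tournament m} (hW : W ∈ Rtop a) (hW' : W' ∈ Rtop a)
    (U : Tournament m) (b : Fin m) :
    (sigmaT W W' U).1 b a = U.1 b a ∧ (sigmaT W W' U).1 a b = U.1 a b := by
  by_cases hb : b = a
  · subst hb
    constructor <;>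
    · rw [sigmaT_apply]
      simp [t_irrefl]
  · have h1 : W.1 a b = true := hW b hb
    have h2 : W'.1 a b = true := hW' b hb
    have h3 : W.1 b a = false := by rw [t_anti W hb, h1]; rfl
    have h4 : W'.1 b a = false := by rw [t_anti W' hb, h2]; rfl
    constructor
    · rw [sigmaT_apply, h3, h4]; simp
    · rw [sigmaT_apply, h1, h2]; simp

/-- size of an a-bits-measurable function is constant on `Rtop a` -/
lemma size_const {φ : ℝ} (hφ : 0 < φ) {a : Fin m} {W W' : Tournament m}
    (hW : W ∈ Rtop a) (hW' : W' ∈ Rtop a) (g : (Fin n → Tournament m) → ℝ)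
    (hg : ∀ P P' : Fin n → Tournament m,
      (∀ i b, (P i).1 b a = (P' i).1 b a ∧ (P i).1 a b = (P' i).1 a b) → g P = g P') :
    Size (condorcet φ n) g W = Size (condorcet φ n) g W' := by
  classical
  set σ := sigmaT W W' with hσ
  set Φ : (Fin n → Tournament m) ≃ (Fin n → Tournament m) :=
    Equiv.piCongrRight (fun _ => (sigmaT_invol W W').toPerm) with hΦ
  rw [Size, Size]
  rw [← Equiv.sum_comp Φ (fun P => condorcet φ n W' P * g P)]
  refine Finset.sum_congr rfl fun P _ => ?_
  have h1 : condorcet φ n W' (Φ P) = condorcet φ n W P := by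
    show (∏ i, condorcet1 φ W' (σ (P i))) = ∏ i, condorcet1 φ W (P i)
    refine Finset.prod_congr rfl fun i _ => ?_
    rw [condorcet1, condorcet1, kt_sigmaT]
    congr 1
    exact Zc_const φ W' W
  have h2 : g (Φ P) = g P := by
    refine hg _ _ fun i b => ?_
    exact sigmaT_bits hW hW' (P i) b
  rw [h1, h2]
end
section
variable {m n : ℕ}

def W0 (a : Fin m) : Tournament m := topify a default

lemma W0_mem (a : Fin m) : W0 a ∈ Rtop a := topify_mem _ _

lemma wpairT_le (P : Fin n → Tournament m) (b a : Fin m) :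
    -(n : ℤ) ≤ wpairT P b a ∧ wpairT P b a ≤ (n : ℤ) := by
  rw [wpairT]
  have h1 : ((Finset.univ.filter (fun i => (P i).1 b a = true)).card : ℤ) ≤ n := by
    have := Finset.card_filter_le (Finset.univ : Finset (Fin n))
      (fun i => (P i).1 b a = true)
    simp only [Finset.card_univ, Fintype.card_fin] at this
    exact_mod_cast this
  have h2 : ((Finset.univ.filter (fun i => (P i).1 a b = true)).card : ℤ) ≤ n := by
    have := Finset.card_filter_le (Finset.univ : Finset (Fin n))
      (fun i => (P i).1 a b = true)
    simp only [Finset.card_univ, Fintype.card_fin] at this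
    exact_mod_cast this
  constructor <;> [nlinarith [Int.ofNat_nonneg ((Finset.univ.filter (fun i => (P i).1 b a = true)).card)];
    nlinarith [Int.ofNat_nonneg ((Finset.univ.filter (fun i => (P i).1 a b = true)).card)]]

lemma wsetT_ge (P : Fin n → Tournament m) (B : Finset (Fin m)) (a : Fin m) :
    -((n : ℤ) * B.card) ≤ wsetT P B a := by
  rw [wsetT]
  calc -((n : ℤ) * B.card) = ∑ _b ∈ B, -(n : ℤ) := by
        rw [Finset.sum_const, nsmul_eq_mul]; ring
    _ ≤ _ := Finset.sum_le_sum fun b _ => (wpairT_le P b a).1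

lemma wsetT_le (P : Fin n → Tournament m) (B : Finset (Fin m)) (a : Fin m) :
    wsetT P B a ≤ (n : ℤ) * B.card := by
  rw [wsetT]
  calc ∑ b ∈ B, wpairT P b a ≤ ∑ _b ∈ B, (n : ℤ) :=
        Finset.sum_le_sum fun b _ => (wpairT_le P b a).2
    _ = (n : ℤ) * B.card := by rw [Finset.sum_const, nsmul_eq_mul]; ring

lemma cardB_le (B : Finset (Fin m)) : (B.card : ℤ) ≤ m := by
  have := Finset.card_le_univ B
  simp only [Finset.card_univ, Fintype.card_fin] at this
  exact_mod_cast this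

lemma wsetT_ge' (hn : 0 < n) (P : Fin n → Tournament m) (B : Finset (Fin m)) (a : Fin m) :
    -((n : ℤ) * m) ≤ wsetT P B a := by
  refine le_trans ?_ (wsetT_ge P B a)
  have := cardB_le B
  have hn' : (0:ℤ) ≤ n := by positivity
  nlinarith

lemma wsetT_le' (P : Fin n → Tournament m) (B : Finset (Fin m)) (a : Fin m) :
    wsetT P B a ≤ (n : ℤ) * m := by
  refine le_trans (wsetT_le P B a) ?_
  have := cardB_le B
  have : ((B.card:ℤ)) ≤ m := this
  have hn' : (0:ℤ) ≤ n := by positivity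
  nlinarith [Int.ofNat_nonneg B.card]

noncomputable def Sq (φ : ℝ) (n : ℕ) (a : Fin m) (B : Finset (Fin m)) (c : ℤ) : ℝ :=
  ∑ P ∈ Finset.univ.filter (fun P : Fin n → Tournament m => c ≤ wsetT P B a),
    condorcet φ n (W0 a) P

lemma Sq_antitone {φ : ℝ} (hφ : 0 < φ) (a : Fin m) (B : Finset (Fin m)) {c d : ℤ}
    (h : c ≤ d) : Sq φ n a B d ≤ Sq φ n a B c := by
  refine Finset.sum_le_sum_of_subset_of_nonneg (fun P hP => ?_)
    (fun P _ _ => (condorcet_pos hφ _ P).le)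
  simp only [Finset.mem_filter, Finset.mem_univ, true_and] at hP ⊢
  omega

lemma Sq_one {φ : ℝ} (hφ : 0 < φ) (hn : 0 < n) (a : Fin m) (B : Finset (Fin m)) {c : ℤ}
    (h : c ≤ -((n:ℤ) * m)) : Sq φ n a B c = 1 := by
  rw [Sq]
  rw [Finset.filter_true_of_mem fun P _ => le_trans h (wsetT_ge' hn P B a)]
  exact sum_condorcet hφ _

lemma Sq_zero {φ : ℝ} (a : Fin m) (B : Finset (Fin m)) {c : ℤ}
    (h : (n:ℤ) * m < c) : Sq φ n a B c = 0 := by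
  rw [Sq]
  rw [Finset.filter_false_of_mem fun P _ hc => absurd hc (by
    have := wsetT_le' (n := n) P B a
    omega)]
  exact Finset.sum_empty

lemma wTestT_int (B : Finset (Fin m)) (a : Fin m) (K : ℤ) (Γ : ℝ)
    (P : Fin n → Tournament m) :
    wTestT n B a (K : ℝ) Γ P =
      if K < wsetT P B a then 1 else if wsetT P B a < K then 0 else Γ := by
  rw [wTestT]
  simp only [Int.cast_lt]

lemma isTest_wTestT (B : Finset (Fin m)) (a : Fin m) (K : ℝ) {Γ : ℝ} (h0 : 0 ≤ Γ)
    (h1 : Γ ≤ 1) : IsTest (wTestT n B a K Γ) := by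
  intro P
  rw [wTestT]
  split_ifs <;> norm_num [h0, h1]

/-- Size of the threshold test at any tournament -/
lemma size_wTestT {φ : ℝ} (B : Finset (Fin m)) (a : Fin m) (K : ℤ) (Γ : ℝ)
    (W : Tournament m) :
    Size (condorcet φ n) (wTestT n B a (K : ℝ) Γ) W =
      (∑ P ∈ Finset.univ.filter (fun P : Fin n → Tournament m => K < wsetT P B a),
        condorcet φ n W P) +
      Γ * (∑ P ∈ Finset.univ.filter (fun P : Fin n → Tournament m => wsetT P B a = K),
        condorcet φ n W P) := by
  classical
  rw [Size]
  rw [← Finset.sum_filter_add_sum_filter_not Finset.univ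
    (fun P : Fin n → Tournament m => K < wsetT P B a)]
  congr 1
  · refine Finset.sum_congr rfl fun P hP => ?_
    simp only [Finset.mem_filter] at hP
    rw [wTestT_int, if_pos hP.2, mul_one]
  · rw [← Finset.sum_filter_add_sum_filter_not
      (Finset.univ.filter (fun P : Fin n → Tournament m => ¬ K < wsetT P B a))
      (fun P : Fin n → Tournament m => wsetT P B a < K)]
    have hz : ∀ P ∈ (Finset.univ.filter
        (fun P : Fin n → Tournament m => ¬ K < wsetT P B a)).filter
        (fun P => wsetT P B a < K),
        condorcet φ n W P * wTestT n B a (K:ℝ) Γ P = 0 := by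
      intro P hP
      simp only [Finset.mem_filter] at hP
      rw [wTestT_int, if_neg (by omega), if_pos hP.2, mul_zero]
    rw [Finset.sum_congr rfl hz, Finset.sum_const_zero, zero_add]
    have hset : (Finset.univ.filter
        (fun P : Fin n → Tournament m => ¬ K < wsetT P B a)).filter
        (fun P => ¬ wsetT P B a < K) =
        Finset.univ.filter (fun P : Fin n → Tournament m => wsetT P B a = K) := by
      ext P
      simp only [Finset.mem_filter, Finset.mem_univ, true_and]
      omega
    rw [hset, Finset.mul_sum]
    refine Finset.sum_congr rfl fun P hP => ?_
    simp only [Finset.mem_filter] at hP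
    rw [wTestT_int, if_neg (by omega), if_neg (by omega)]
    ring

lemma Sq_succ {φ : ℝ} (a : Fin m) (B : Finset (Fin m)) (K : ℤ) :
    Sq φ n a B K = Sq φ n a B (K + 1) +
      ∑ P ∈ Finset.univ.filter (fun P : Fin n → Tournament m => wsetT P B a = K),
        condorcet φ n (W0 a) P := by
  classical
  rw [Sq, Sq]
  rw [← Finset.sum_filter_add_sum_filter_not
    (Finset.univ.filter (fun P : Fin n → Tournament m => K ≤ wsetT P B a))
    (fun P : Fin n → Tournament m => K + 1 ≤ wsetT P B a)]
  congr 1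
  · congr 1
    ext P
    simp only [Finset.mem_filter, Finset.mem_univ, true_and]
    omega
  · congr 1
    ext P
    simp only [Finset.mem_filter, Finset.mem_univ, true_and]
    omega

lemma Sq_lt_strict {φ : ℝ} (hφ : 0 < φ) (a : Fin m) (B : Finset (Fin m)) (K : ℤ) :
    Sq φ n a B (K+1) ≤ Sq φ n a B K := Sq_antitone hφ a B (by omega)

/-- existence of exact-size threshold tests -/
lemma quantile {φ : ℝ} (hφ : 0 < φ) (hn : 0 < n) (a : Fin m) (B : Finset (Fin m))
    {α : ℝ} (hα0 : 0 < α) (hα1 : α < 1) :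
    ∃ K : ℤ, ∃ Γ : ℝ, 0 ≤ Γ ∧ Γ ≤ 1 ∧
      Size (condorcet φ n) (wTestT n B a (K : ℝ) Γ) (W0 a) = α ∧
      α ≤ Sq φ n a B K ∧ Sq φ n a B (K + 1) < α := by
  classical
  set N : ℤ := (n : ℤ) * m with hN
  have hN0 : 0 ≤ N := by positivity
  set cand : Finset ℤ := (Finset.Icc (-N) (N+1)).filter (fun c => α ≤ Sq φ n a B c)
    with hcand
  have hne : cand.Nonempty := by
    refine ⟨-N, ?_⟩
    simp only [hcand, Finset.mem_filter, Finset.mem_Icc]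
    refine ⟨⟨le_refl _, by omega⟩, ?_⟩
    rw [Sq_one hφ hn a B (le_refl _)]
    exact hα1.le
  set K : ℤ := cand.max' hne with hK
  have hKmem : K ∈ cand := Finset.max'_mem _ _
  have hKicc : K ∈ Finset.Icc (-N) (N+1) := (Finset.mem_filter.mp hKmem).1
  have hKS : α ≤ Sq φ n a B K := (Finset.mem_filter.mp hKmem).2
  have hKne : K ≠ N + 1 := by
    intro h
    have : Sq φ n a B K = 0 := Sq_zero a B (by omega)
    rw [this] at hKS
    linarith
  have hKle : K ≤ N := by
    have := (Finset.mem_Icc.mp hKicc).2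
    omega
  have hK1 : Sq φ n a B (K+1) < α := by
    by_contra hcon
    push_neg at hcon
    have hmem : K + 1 ∈ cand := by
      simp only [hcand, Finset.mem_filter, Finset.mem_Icc]
      have := (Finset.mem_Icc.mp hKicc).1
      exact ⟨⟨by omega, by omega⟩, hcon⟩
    have := Finset.le_max' cand (K+1) hmem
    omega
  have hdpos : 0 < Sq φ n a B K - Sq φ n a B (K+1) := by linarith
  refine ⟨K, (α - Sq φ n a B (K+1)) / (Sq φ n a B K - Sq φ n a B (K+1)), ?_, ?_, ?_, hKS, hK1⟩
  · exact div_nonneg (by linarith) hdpos.le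
  · rw [div_le_one hdpos]
    linarith
  · rw [size_wTestT]
    have h1 : (∑ P ∈ Finset.univ.filter
        (fun P : Fin n → Tournament m => K < wsetT P B a), condorcet φ n (W0 a) P)
        = Sq φ n a B (K+1) := by
      rw [Sq]
      congr 1
    have h2 : (∑ P ∈ Finset.univ.filter
        (fun P : Fin n → Tournament m => wsetT P B a = K), condorcet φ n (W0 a) P)
        = Sq φ n a B K - Sq φ n a B (K+1) := by
      rw [Sq_succ (φ := φ) a B K]; ring
    rw [h1, h2, div_mul_cancel₀ _ hdpos.ne']
    ring

end
section
variable {m n : ℕ}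

lemma wsetT_congr (a : Fin m) (B : Finset (Fin m)) {P P' : Fin n → Tournament m}
    (h : ∀ i b, (P i).1 b a = (P' i).1 b a ∧ (P i).1 a b = (P' i).1 a b) :
    wsetT P B a = wsetT P' B a := by
  rw [wsetT, wsetT]
  refine Finset.sum_congr rfl fun b _ => ?_
  rw [wpairT, wpairT]
  have h1 : Finset.univ.filter (fun i => (P i).1 b a = true)
      = Finset.univ.filter (fun i => (P' i).1 b a = true) :=
    Finset.filter_congr fun i _ => by rw [(h i b).1]
  have h2 : Finset.univ.filter (fun i => (P i).1 a b = true)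
      = Finset.univ.filter (fun i => (P' i).1 a b = true) :=
    Finset.filter_congr fun i _ => by rw [(h i b).2]
  rw [h1, h2]

lemma size_wTestT_const {φ : ℝ} (hφ : 0 < φ) {a : Fin m} {W W' : Tournament m}
    (hW : W ∈ Rtop a) (hW' : W' ∈ Rtop a) (B : Finset (Fin m)) (K Γ : ℝ) :
    Size (condorcet φ n) (wTestT n B a K Γ) W
      = Size (condorcet φ n) (wTestT n B a K Γ) W' := by
  refine size_const hφ hW hW' _ fun P P' h => ?_
  rw [wTestT, wTestT]
  rw [wsetT_congr a B h]

lemma sum_filter_transfer {φ : ℝ} (hφ : 0 < φ) {a : Fin m} {W W' : Tournament m}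
    (hW : W ∈ Rtop a) (hW' : W' ∈ Rtop a) (B : Finset (Fin m)) (c : ℤ) :
    (∑ P ∈ Finset.univ.filter (fun P : Fin n → Tournament m => c ≤ wsetT P B a),
      condorcet φ n W P)
    = ∑ P ∈ Finset.univ.filter (fun P : Fin n → Tournament m => c ≤ wsetT P B a),
      condorcet φ n W' P := by
  have key : ∀ W'' : Tournament m,
      (∑ P ∈ Finset.univ.filter (fun P : Fin n → Tournament m => c ≤ wsetT P B a),
        condorcet φ n W'' P)
      = Size (condorcet φ n)
          (fun P => if c ≤ wsetT P B a then (1 : ℝ) else 0) W'' := by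
    intro W''
    rw [Size, Finset.sum_filter]
    refine Finset.sum_congr rfl fun P _ => ?_
    split_ifs <;> ring
  rw [key W, key W']
  refine size_const hφ hW hW' _ fun P P' h => ?_
  rw [wsetT_congr a B h]

/-- Neyman–Pearson, forward direction. -/
lemma NP_forward {φ : ℝ} (hφ0 : 0 < φ) (hφ1 : φ < 1) (a : Fin m) (V : Tournament m)
    (B : Finset (Fin m)) (hB : Finset.univ.filter (fun b => V.1 b a = true) = B)
    (K : ℤ) (Γ : ℝ) {α : ℝ}
    (hsize : Size (condorcet φ n) (wTestT n B a (K : ℝ) Γ) (topify a V) = α)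
    (f : (Fin n → Tournament m) → ℝ) (hf : IsTest f)
    (hfs : Size (condorcet φ n) f (topify a V) ≤ α) :
    Power (condorcet φ n) f V ≤ Power (condorcet φ n) (wTestT n B a (K : ℝ) Γ) V := by
  classical
  set π := condorcet φ n with hπ
  set W : Tournament m := topify a V with hW
  set g := wTestT n B a (K : ℝ) Γ with hg
  set k : ℝ := φ ^ (-K) with hk
  have hkpos : 0 < k := zpow_pos hφ0 _
  have hterm : ∀ P : Fin n → Tournament m,
      0 ≤ (g P - f P) * (π V P - k * π W P) := by
    intro P
    have hratio : π V P = φ ^ (-(wsetT P B a)) * π W P := cond_ratio hφ0 a V B hB P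
    have hWpos : 0 < π W P := condorcet_pos hφ0 _ _
    have hfP := hf P
    rcases lt_trichotomy (wsetT P B a) K with hc | hc | hc
    · have hgP : g P = 0 := by rw [hg, wTestT_int, if_neg (by omega), if_pos hc]
      have hlt : φ ^ (-(wsetT P B a)) < φ ^ (-K) :=
        zpow_lt_zpow_right_of_lt_one₀ hφ0 hφ1 (by omega)
      have : π V P - k * π W P < 0 := by
        rw [hratio, hk, ← sub_mul]
        exact mul_neg_of_neg_of_pos (by linarith) hWpos
      rw [hgP]
      nlinarith [hfP.1]
    · have : π V P - k * π W P = 0 := by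
        rw [hratio, hk, hc, ← sub_mul]
        ring
      rw [this, mul_zero]
    · have hgP : g P = 1 := by rw [hg, wTestT_int, if_pos hc]
      have hlt : φ ^ (-K) < φ ^ (-(wsetT P B a)) :=
        zpow_lt_zpow_right_of_lt_one₀ hφ0 hφ1 (by omega)
      have : 0 < π V P - k * π W P := by
        rw [hratio, hk, ← sub_mul]
        exact mul_pos (by linarith) hWpos
      rw [hgP]
      nlinarith [hfP.2]
  have hexp : ∑ P, (g P - f P) * (π V P - k * π W P) =
      Power π g V - Power π f V - k * (Size π g W - Size π f W) := by
    have e1 : ∑ P, (g P - f P) * (π V P - k * π W P)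
        = ∑ P, ((π V P * g P - π V P * f P)
            - (k * (π W P * g P) - k * (π W P * f P))) :=
      Finset.sum_congr rfl fun P _ => by ring
    rw [e1, Finset.sum_sub_distrib, Finset.sum_sub_distrib, Finset.sum_sub_distrib,
      ← Finset.mul_sum, ← Finset.mul_sum, Power, Power, Size, Size]
    ring
  have h0 : 0 ≤ ∑ P, (g P - f P) * (π V P - k * π W P) :=
    Finset.sum_nonneg fun P _ => hterm P
  rw [hexp, hsize] at h0
  nlinarith

/-- Neyman–Pearson, converse / uniqueness direction. -/
lemma NP_converse {φ : ℝ} (hφ0 : 0 < φ) (hφ1 : φ < 1) (a : Fin m) (V : Tournament m)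
    (B : Finset (Fin m)) (hB : Finset.univ.filter (fun b => V.1 b a = true) = B)
    (K : ℤ) (Γ : ℝ) {α : ℝ}
    (hsize : Size (condorcet φ n) (wTestT n B a (K : ℝ) Γ) (topify a V) = α)
    (f : (Fin n → Tournament m) → ℝ) (hf : IsTest f)
    (hfs : Size (condorcet φ n) f (topify a V) ≤ α)
    (hpow : Power (condorcet φ n) f V
      = Power (condorcet φ n) (wTestT n B a (K : ℝ) Γ) V) :
    Size (condorcet φ n) f (topify a V) = α ∧
      (∀ P, K < wsetT P B a → f P = 1) ∧ (∀ P, wsetT P B a < K → f P = 0) := by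
  classical
  set π := condorcet φ n with hπ
  set W : Tournament m := topify a V with hW
  set g := wTestT n B a (K : ℝ) Γ with hg
  set k : ℝ := φ ^ (-K) with hk
  have hkpos : 0 < k := zpow_pos hφ0 _
  have hterm : ∀ P : Fin n → Tournament m,
      0 ≤ (g P - f P) * (π V P - k * π W P) := by
    intro P
    have hratio : π V P = φ ^ (-(wsetT P B a)) * π W P := cond_ratio hφ0 a V B hB P
    have hWpos : 0 < π W P := condorcet_pos hφ0 _ _
    have hfP := hf P
    rcases lt_trichotomy (wsetT P B a) K with hc | hc | hc
    · have hgP : g P = 0 := by rw [hg, wTestT_int, if_neg (by omega), if_pos hc]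
      have hlt : φ ^ (-(wsetT P B a)) < φ ^ (-K) :=
        zpow_lt_zpow_right_of_lt_one₀ hφ0 hφ1 (by omega)
      have : π V P - k * π W P < 0 := by
        rw [hratio, hk, ← sub_mul]
        exact mul_neg_of_neg_of_pos (by linarith) hWpos
      rw [hgP]
      nlinarith [hfP.1]
    · have : π V P - k * π W P = 0 := by
        rw [hratio, hk, hc, ← sub_mul]
        ring
      rw [this, mul_zero]
    · have hgP : g P = 1 := by rw [hg, wTestT_int, if_pos hc]
      have hlt : φ ^ (-K) < φ ^ (-(wsetT P B a)) :=
        zpow_lt_zpow_right_of_lt_one₀ hφ0 hφ1 (by omega)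
      have : 0 < π V P - k * π W P := by
        rw [hratio, hk, ← sub_mul]
        exact mul_pos (by linarith) hWpos
      rw [hgP]
      nlinarith [hfP.2]
  have hexp : ∑ P, (g P - f P) * (π V P - k * π W P) =
      Power π g V - Power π f V - k * (Size π g W - Size π f W) := by
    have e1 : ∑ P, (g P - f P) * (π V P - k * π W P)
        = ∑ P, ((π V P * g P - π V P * f P)
            - (k * (π W P * g P) - k * (π W P * f P))) :=
      Finset.sum_congr rfl fun P _ => by ring
    rw [e1, Finset.sum_sub_distrib, Finset.sum_sub_distrib, Finset.sum_sub_distrib,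
      ← Finset.mul_sum, ← Finset.mul_sum, Power, Power, Size, Size]
    ring
  have h0 : 0 ≤ ∑ P, (g P - f P) * (π V P - k * π W P) :=
    Finset.sum_nonneg fun P _ => hterm P
  have hle : ∑ P, (g P - f P) * (π V P - k * π W P) ≤ 0 := by
    rw [hexp, hsize, hpow]
    nlinarith
  have hzero : ∑ P, (g P - f P) * (π V P - k * π W P) = 0 := le_antisymm hle h0
  have hSf : Size π f W = α := by
    have h1 : Power π g V - Power π f V - k * (Size π g W - Size π f W) = 0 := by
      rw [← hexp]; exact hzero
    rw [hpow, hsize] at h1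
    have hk' : k * (α - Size π f W) = 0 := by linarith
    rcases mul_eq_zero.mp hk' with h | h
    · exact absurd h hkpos.ne'
    · linarith
  have hptwise : ∀ P ∈ Finset.univ, (g P - f P) * (π V P - k * π W P) = 0 :=
    (Finset.sum_eq_zero_iff_of_nonneg fun P _ => hterm P).mp hzero
  refine ⟨hSf, fun P hc => ?_, fun P hc => ?_⟩
  · have hgP : g P = 1 := by rw [hg, wTestT_int, if_pos hc]
    have hratio : π V P = φ ^ (-(wsetT P B a)) * π W P := cond_ratio hφ0 a V B hB P
    have hWpos : 0 < π W P := condorcet_pos hφ0 _ _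
    have hlt : φ ^ (-K) < φ ^ (-(wsetT P B a)) :=
      zpow_lt_zpow_right_of_lt_one₀ hφ0 hφ1 (by omega)
    have hpos : 0 < π V P - k * π W P := by
      rw [hratio, hk, ← sub_mul]
      exact mul_pos (by linarith) hWpos
    have := hptwise P (Finset.mem_univ P)
    rcases mul_eq_zero.mp this with h | h
    · rw [hgP] at h; linarith
    · exact absurd h hpos.ne'
  · have hgP : g P = 0 := by rw [hg, wTestT_int, if_neg (by omega), if_pos hc]
    have hratio : π V P = φ ^ (-(wsetT P B a)) * π W P := cond_ratio hφ0 a V B hB P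
    have hWpos : 0 < π W P := condorcet_pos hφ0 _ _
    have hlt : φ ^ (-(wsetT P B a)) < φ ^ (-K) :=
      zpow_lt_zpow_right_of_lt_one₀ hφ0 hφ1 (by omega)
    have hneg : π V P - k * π W P < 0 := by
      rw [hratio, hk, ← sub_mul]
      exact mul_neg_of_neg_of_pos (by linarith) hWpos
    have := hptwise P (Finset.mem_univ P)
    rcases mul_eq_zero.mp this with h | h
    · rw [hgP] at h; linarith
    · exact absurd h hneg.ne

/-- the threshold test with exact size `α` is most powerful for `Rtop a` vs `V`. -/
lemma mp_threshold {φ : ℝ} (hφ0 : 0 < φ) (hφ1 : φ < 1) (a : Fin m) (V : Tournament m)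
    (B : Finset (Fin m)) (hB : Finset.univ.filter (fun b => V.1 b a = true) = B)
    (K : ℤ) {Γ : ℝ} (hΓ0 : 0 ≤ Γ) (hΓ1 : Γ ≤ 1) {α : ℝ}
    (hsize : Size (condorcet φ n) (wTestT n B a (K : ℝ) Γ) (W0 a) = α) :
    IsMostPowerful (condorcet φ n) (Rtop a) V α (wTestT n B a (K : ℝ) Γ) := by
  have hconst : ∀ W ∈ Rtop a, Size (condorcet φ n) (wTestT n B a (K : ℝ) Γ) W = α :=
    fun W hW => by rw [size_wTestT_const hφ0 hW (W0_mem a) B]; exact hsize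
  refine ⟨isTest_wTestT B a _ hΓ0 hΓ1, fun W hW => le_of_eq (hconst W hW),
    fun f hf hfl => ?_⟩
  exact NP_forward hφ0 hφ1 a V B hB K Γ (hconst _ (topify_mem a V)) f hf
    (hfl _ (topify_mem a V))

end
section
variable {m n : ℕ}

/-- tournament with prescribed bits against `a` -/
def colT (a : Fin m) (β : Fin m → Bool) : Tournament m :=
  ⟨fun x y => if y = a then (β x && !decide (x = a))
    else if x = a then !(β y && !decide (y = a)) else decide (x < y), by
    intro x y
    constructor
    · rintro rfl
      by_cases h : x = a <;> simp [h]
    · intro hxy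
      by_cases hy : y = a
      · subst hy
        simp [hxy, Ne.symm hxy]
      · by_cases hx : x = a
        · subst hx
          simp [hy, Ne.symm hxy]
        · simp only [hy, if_false, hx]
          rcases lt_or_gt_of_ne hxy with h | h
          · simp [h, asymm h]
          · simp [h, asymm h, not_lt_of_gt h]⟩

lemma colT_ba (a : Fin m) (β : Fin m → Bool) {b : Fin m} (hb : b ≠ a) :
    (colT a β).1 b a = β b := by
  show (if a = a then _ else _) = _
  simp [hb]

lemma colT_ab (a : Fin m) (β : Fin m → Bool) {b : Fin m} (hb : b ≠ a) :
    (colT a β).1 a b = !β b := by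
  show (if b = a then _ else _) = _
  simp [hb]

lemma wpairT_colT_const (a : Fin m) (β : Fin m → Bool) {b : Fin m} (hb : b ≠ a) :
    wpairT (fun _ : Fin n => colT a β) b a = if β b then (n : ℤ) else -n := by
  rw [wpairT]
  cases hβ : β b
  · rw [Finset.filter_false_of_mem (fun i _ => by rw [colT_ba a β hb, hβ]; simp),
      Finset.filter_true_of_mem (fun i _ => by rw [colT_ab a β hb, hβ]; rfl)]
    simp
  · rw [Finset.filter_true_of_mem (fun i _ => by rw [colT_ba a β hb, hβ]),
      Finset.filter_false_of_mem (fun i _ => by rw [colT_ab a β hb, hβ]; simp)]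
    simp

lemma wpairT_Qp (hn : 0 < n) (a : Fin m) (b₀ : Fin m) (i₀ : Fin n) {b : Fin m}
    (hb : b ≠ a) :
    wpairT (fun i : Fin n => if i = i₀ then colT a (fun c => !decide (c = b₀))
      else colT a (fun _ => true)) b a
    = if b = b₀ then (n : ℤ) - 2 else n := by
  classical
  set Q : Fin n → Tournament m := fun i => if i = i₀ then
    colT a (fun c => !decide (c = b₀)) else colT a (fun _ => true) with hQ
  have hba : ∀ i, (Q i).1 b a = if i = i₀ then !decide (b = b₀) else true := by
    intro i
    rw [hQ]
    by_cases h : i = i₀ <;> simp only [h, if_true, if_false, colT_ba a _ hb]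
  have hab : ∀ i, (Q i).1 a b = if i = i₀ then decide (b = b₀) else false := by
    intro i
    rw [hQ]
    by_cases h : i = i₀ <;> simp only [h, if_true, if_false, colT_ab a _ hb] <;> simp
  rw [wpairT]
  by_cases hbb : b = b₀
  · subst hbb
    have h1 : Finset.univ.filter (fun i => (Q i).1 b a = true) = Finset.univ.erase i₀ := by
      ext i
      rw [Finset.mem_filter, hba i]
      by_cases h : i = i₀ <;> simp [h, Finset.mem_erase]
    have h2 : Finset.univ.filter (fun i => (Q i).1 a b = true) = {i₀} := by
      ext i
      rw [Finset.mem_filter, hab i]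
      by_cases h : i = i₀ <;> simp [h]
    rw [h1, h2, Finset.card_erase_of_mem (Finset.mem_univ i₀)]
    simp only [Finset.card_univ, Fintype.card_fin, Finset.card_singleton, if_pos rfl]
    push_cast [Nat.cast_sub (by omega : 1 ≤ n)]
    ring
  · have h1 : Finset.univ.filter (fun i => (Q i).1 b a = true) = Finset.univ := by
      refine Finset.filter_true_of_mem fun i _ => ?_
      rw [hba i]
      by_cases h : i = i₀ <;> simp [h, hbb]
    have h2 : Finset.univ.filter (fun i => (Q i).1 a b = true) = ∅ := by
      refine Finset.filter_false_of_mem fun i _ => ?_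
      rw [hab i]
      by_cases h : i = i₀ <;> simp [h, hbb]
    rw [h1, h2]
    simp [hbb]

end
section
variable {m n : ℕ}

lemma key_contra {φ : ℝ} (hφ0 : 0 < φ) (hφ1 : φ < 1) (hn : 2 ≤ n)
    (a : Fin m) (H₁ : Set (Tournament m)) (V₁ V₂ : Tournament m)
    (hV₁ : V₁ ∈ H₁) (hV₂ : V₂ ∈ H₁) (hV₂top : V₂ ∉ Rtop a)
    (bs : Fin m) (hbs1 : bs ∈ Finset.univ.filter (fun b => V₁.1 b a = true))
    (hbs2 : bs ∉ Finset.univ.filter (fun b => V₂.1 b a = true))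
    (hUMP : ∀ α : ℝ, 0 < α → α < 1 →
      ∃ f, IsUMP (condorcet φ n) (Rtop a) H₁ α f) : False := by
  classical
  set π := condorcet (m := m) φ n with hπ
  set B₁ : Finset (Fin m) := Finset.univ.filter (fun b => V₁.1 b a = true) with hB₁
  set B₂ : Finset (Fin m) := Finset.univ.filter (fun b => V₂.1 b a = true) with hB₂
  have haB₁ : a ∉ B₁ := notmem_of_filter rfl
  have haB₂ : a ∉ B₂ := notmem_of_filter rfl
  have hbsa : bs ≠ a := fun h => haB₁ (h ▸ hbs1)
  -- find b₀ ∈ B₂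
  have hex : ∃ b₀, b₀ ∈ B₂ := by
    rw [Rtop] at hV₂top
    simp only [Set.mem_setOf_eq, not_forall] at hV₂top
    obtain ⟨b₀, hb₀a, hb₀⟩ := hV₂top
    refine ⟨b₀, ?_⟩
    have h1 : V₂.1 a b₀ = false := by
      cases h : V₂.1 a b₀
      · rfl
      · exact absurd h hb₀
    have h2 : V₂.1 b₀ a = true := by
      have := t_anti V₂ (Ne.symm hb₀a)
      rw [h1] at this
      cases h : V₂.1 b₀ a
      · rw [h] at this; simp at this
      · rfl
    rw [hB₂]
    simp [h2]
  obtain ⟨b₀, hb₀⟩ := hex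
  have hb₀a : b₀ ≠ a := fun h => haB₂ (h ▸ hb₀)
  have hbsb₀ : bs ≠ b₀ := fun h => hbs2 (h ▸ hb₀)
  -- special profiles
  set M₂ : ℤ := (n : ℤ) * B₂.card with hM₂
  set Pp : Fin n → Tournament m := fun _ => colT a (fun b => decide (b ∈ B₂)) with hPp
  have hn0 : 0 < n := by omega
  set i₀ : Fin n := ⟨0, hn0⟩ with hi₀
  set Qp : Fin n → Tournament m := fun i => if i = i₀ then
    colT a (fun c => !decide (c = b₀)) else colT a (fun _ => true) with hQp
  -- statistic values
  have hT2P : wsetT Pp B₂ a = M₂ := by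
    rw [wsetT]
    rw [Finset.sum_congr rfl (fun b hb => wpairT_colT_const a _
      (fun h => haB₂ (h ▸ hb)))]
    rw [Finset.sum_congr rfl (fun b hb => by
      rw [if_pos (by simpa using hb)] : ∀ b ∈ B₂, _ = (n:ℤ))]
    rw [Finset.sum_const, nsmul_eq_mul, hM₂]
    ring
  have hT2Q : wsetT Qp B₂ a = M₂ - 2 := by
    rw [wsetT]
    rw [Finset.sum_congr rfl (fun b hb => wpairT_Qp hn0 a b₀ i₀
      (fun h => haB₂ (h ▸ hb)))]
    have : ∀ b ∈ B₂, (if b = b₀ then (n:ℤ) - 2 else n) = n + (if b = b₀ then -2 else 0) := by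
      intro b _
      by_cases h : b = b₀ <;> simp [h] <;> ring
    rw [Finset.sum_congr rfl this, Finset.sum_add_distrib, Finset.sum_const,
      Finset.sum_ite_eq' B₂ b₀ (fun _ => (-2 : ℤ)), if_pos hb₀, nsmul_eq_mul, hM₂]
    ring
  have hT1 : wsetT Pp B₁ a + 2 ≤ wsetT Qp B₁ a := by
    rw [wsetT, wsetT]
    have hδ : ∀ b ∈ B₁, wpairT Qp b a - wpairT Pp b a
        = (if b = b₀ then (n:ℤ) - 2 else n) - (if b ∈ B₂ then (n:ℤ) else -n) := by
      intro b hb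
      have hba : b ≠ a := fun h => haB₁ (h ▸ hb)
      rw [wpairT_Qp hn0 a b₀ i₀ hba, wpairT_colT_const a _ hba]
      simp
    set t : Fin m → ℤ := fun b =>
      (if b = b₀ then (n:ℤ) - 2 else n) - (if b ∈ B₂ then (n:ℤ) else -n) with ht
    have hsum : (2:ℤ) ≤ ∑ b ∈ B₁, t b := by
      have hbs : t bs = 2 * n := by
        simp only [ht]
        simp only [if_neg hbsb₀, if_neg hbs2]
        ring
      have hrest : ∀ b ∈ B₁.erase bs, (if b = b₀ then (-2:ℤ) else 0) ≤ t b := by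
        intro b _
        simp only [ht]
        have hnn : (0:ℤ) ≤ (n:ℤ) := by positivity
        split_ifs <;> omega
      have h1 : ∑ b ∈ B₁.erase bs, t b + t bs = ∑ b ∈ B₁, t b :=
        Finset.sum_erase_add B₁ t hbs1
      have h2 : (-2 : ℤ) ≤ ∑ b ∈ B₁.erase bs, t b := by
        calc (-2 : ℤ) ≤ ∑ b ∈ B₁.erase bs, (if b = b₀ then (-2:ℤ) else 0) := by
              rw [Finset.sum_ite_eq' (B₁.erase bs) b₀ (fun _ => (-2:ℤ))]
              by_cases h : b₀ ∈ B₁.erase bs <;> simp [h]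
          _ ≤ _ := Finset.sum_le_sum hrest
      have hn2 : (2:ℤ) ≤ (n:ℤ) := by exact_mod_cast hn
      linarith
    have hteq : ∑ b ∈ B₁, (wpairT Qp b a - wpairT Pp b a) = ∑ b ∈ B₁, t b :=
      Finset.sum_congr rfl hδ
    have hd : ∑ b ∈ B₁, (wpairT Qp b a - wpairT Pp b a)
        = ∑ b ∈ B₁, wpairT Qp b a - ∑ b ∈ B₁, wpairT Pp b a :=
      Finset.sum_sub_distrib _ _
    linarith
  -- the measure and α
  set W₂ : Tournament m := topify a V₂ with hW₂
  have hW₂mem : W₂ ∈ Rtop a := topify_mem a V₂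
  set A0 : Finset (Fin n → Tournament m) :=
    Finset.univ.filter (fun P => M₂ ≤ wsetT P B₂ a) with hA0
  set β₀ : ℝ := ∑ P ∈ A0, π W₂ P with hβ₀
  set α : ℝ := β₀ + π W₂ Qp / 2 with hα
  have hQpos : 0 < π W₂ Qp := condorcet_pos hφ0 _ _
  have hβ₀0 : 0 ≤ β₀ := Finset.sum_nonneg fun P _ => (condorcet_pos hφ0 _ _).le
  have hα0 : 0 < α := by rw [hα]; linarith
  have hQnotin : Qp ∉ A0 := by
    rw [hA0]
    simp only [Finset.mem_filter, Finset.mem_univ, true_and, hT2Q]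
    omega
  have hα1 : α < 1 := by
    have h1 : π W₂ Qp + β₀ = ∑ P ∈ insert Qp A0, π W₂ P :=
      (Finset.sum_insert hQnotin).symm
    have h2 : ∑ P ∈ insert Qp A0, π W₂ P ≤ ∑ P : Fin n → Tournament m, π W₂ P :=
      Finset.sum_le_sum_of_subset_of_nonneg (Finset.subset_univ _)
        (fun P _ _ => (condorcet_pos hφ0 _ _).le)
    rw [sum_condorcet hφ0] at h2
    rw [hα]
    linarith
  -- get the UMP test
  obtain ⟨f, hf⟩ := hUMP α hα0 hα1
  obtain ⟨hftest, hfsize, -⟩ := hf V₂ hV₂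
  -- analysis vs V₂
  obtain ⟨K₂, Γ₂, hΓ₂0, hΓ₂1, hsz₂, hαS₂, -⟩ := quantile hφ0 hn0 a B₂ hα0 hα1
  have hBeq₂ : Finset.univ.filter (fun b => V₂.1 b a = true) = B₂ := rfl
  have hmp₂ := mp_threshold hφ0 hφ1 a V₂ B₂ hBeq₂ K₂ hΓ₂0 hΓ₂1 hsz₂
  have hpow₂ : Power π f V₂ = Power π (wTestT n B₂ a (K₂ : ℝ) Γ₂) V₂ :=
    le_antisymm (hmp₂.2.2 f hftest hfsize)
      ((hf V₂ hV₂).2.2 _ hmp₂.1 hmp₂.2.1)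
  have hszW₂ : Size π (wTestT n B₂ a (K₂ : ℝ) Γ₂) (topify a V₂) = α := by
    rw [size_wTestT_const hφ0 (topify_mem a V₂) (W0_mem a) B₂]
    exact hsz₂
  obtain ⟨-, hf2, -⟩ := NP_converse hφ0 hφ1 a V₂ B₂ hBeq₂ K₂ Γ₂ hszW₂ f hftest
    (hfsize _ (topify_mem a V₂)) hpow₂
  -- K₂ < M₂
  have hβSq : Sq φ n a B₂ M₂ = β₀ := by
    rw [Sq, hβ₀, hA0]
    exact sum_filter_transfer hφ0 (W0_mem a) hW₂mem B₂ M₂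
  have hK₂M : K₂ < M₂ := by
    by_contra hcon
    push_neg at hcon
    have h1 : Sq φ n a B₂ K₂ ≤ Sq φ n a B₂ M₂ := Sq_antitone hφ0 a B₂ hcon
    rw [hβSq] at h1
    have : α ≤ β₀ := le_trans hαS₂ h1
    rw [hα] at this
    linarith
  -- analysis vs V₁
  obtain ⟨K₁, Γ₁, hΓ₁0, hΓ₁1, hsz₁, -, -⟩ := quantile hφ0 hn0 a B₁ hα0 hα1
  have hBeq₁ : Finset.univ.filter (fun b => V₁.1 b a = true) = B₁ := rfl
  obtain ⟨hftest', hfsize', -⟩ := hf V₁ hV₁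
  have hmp₁ := mp_threshold hφ0 hφ1 a V₁ B₁ hBeq₁ K₁ hΓ₁0 hΓ₁1 hsz₁
  have hpow₁ : Power π f V₁ = Power π (wTestT n B₁ a (K₁ : ℝ) Γ₁) V₁ :=
    le_antisymm (hmp₁.2.2 f hftest' hfsize')
      ((hf V₁ hV₁).2.2 _ hmp₁.1 hmp₁.2.1)
  have hszW₁ : Size π (wTestT n B₁ a (K₁ : ℝ) Γ₁) (topify a V₁) = α := by
    rw [size_wTestT_const hφ0 (topify_mem a V₁) (W0_mem a) B₁]
    exact hsz₁
  obtain ⟨-, hf1up, hf1dn⟩ := NP_converse hφ0 hφ1 a V₁ B₁ hBeq₁ K₁ Γ₁ hszW₁ f hftest'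
    (hfsize' _ (topify_mem a V₁)) hpow₁
  -- locate K₁
  have hfPp : f Pp = 1 := hf2 Pp (by rw [hT2P]; exact hK₂M)
  have hK₁le : K₁ ≤ wsetT Pp B₁ a := by
    by_contra h
    push_neg at h
    have := hf1dn Pp h
    rw [hfPp] at this
    norm_num at this
  have hfQp : f Qp = 1 := hf1up Qp (by omega)
  -- contradiction from the size at W₂
  have hones : ∀ P ∈ A0, π W₂ P * f P = π W₂ P := by
    intro P hP
    rw [hA0, Finset.mem_filter] at hP
    rw [hf2 P (by omega), mul_one]
  have hchain : β₀ + π W₂ Qp ≤ Size π f W₂ := by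
    have h1 : Size π f W₂ = ∑ P : Fin n → Tournament m, π W₂ P * f P := rfl
    have h2 : ∑ P ∈ insert Qp A0, π W₂ P * f P ≤
        ∑ P : Fin n → Tournament m, π W₂ P * f P :=
      Finset.sum_le_sum_of_subset_of_nonneg (Finset.subset_univ _)
        (fun P _ _ => mul_nonneg (condorcet_pos hφ0 _ _).le (hftest P).1)
    have h3 : ∑ P ∈ insert Qp A0, π W₂ P * f P
        = π W₂ Qp * f Qp + ∑ P ∈ A0, π W₂ P * f P := Finset.sum_insert hQnotin
    rw [h1]
    rw [Finset.sum_congr rfl hones] at h3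
    rw [hfQp, mul_one] at h3
    rw [← hβ₀] at h3
    linarith
  have hfin : Size π f W₂ ≤ α := hfsize W₂ hW₂mem
  rw [hα] at hfin
  linarith

end

section
variable {m n : ℕ}

lemma part2 {φ : ℝ} (hφ0 : 0 < φ) (hφ1 : φ < 1) (hn : 0 < n) (a : Fin m)
    (H₁ : Set (Tournament m)) (B : Finset (Fin m)) (hB : H₁ ⊆ RBset B a)
    {α : ℝ} (hα0 : 0 < α) (hα1 : α < 1) :
    ∃ K Γ : ℝ, 0 ≤ Γ ∧ Γ ≤ 1 ∧
      IsUMP (condorcet φ n) (Rtop a) H₁ α (wTestT n B a K Γ) := by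
  obtain ⟨K, Γ, hΓ0, hΓ1, hsize, -, -⟩ := quantile hφ0 hn a B hα0 hα1
  refine ⟨(K : ℝ), Γ, hΓ0, hΓ1, fun V hV => ?_⟩
  exact mp_threshold hφ0 hφ1 a V B (hB hV) K hΓ0 hΓ1 hsize

end


/-- **Characterization of UMP non-winner tests for Condorcet.**
For `m ≥ 2`, `n ≥ 2`, and `∅ ≠ H₁ ⊆ ℬ(𝒜)∖R_{a≻others}` : a level-`α` UMP test for
`H₀ = R_{a≻others}` vs `H₁` exists for every `0<α<1` iff `H₁ ⊆ R_{B≻a}` for some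
`B ⊆ 𝒜∖{a}`; moreover in that case the threshold test on `w_P(B≻a)` is a UMP test. -/
theorem stmt11 (m n : ℕ) (hm : 2 ≤ m) (hn : 2 ≤ n) (φ : ℝ) (hφ0 : 0 < φ) (hφ1 : φ < 1)
    (a : Fin m) (H₁ : Set (Tournament m)) (hne : H₁.Nonempty) (hH₁ : H₁ ⊆ (Rtop a)ᶜ) :
    ((∀ α : ℝ, 0 < α → α < 1 →
        ∃ f : (Fin n → Tournament m) → ℝ, IsUMP (condorcet φ n) (Rtop a) H₁ α f) ↔
      ∃ B : Finset (Fin m), a ∉ B ∧ H₁ ⊆ RBset B a) ∧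
    (∀ B : Finset (Fin m), a ∉ B → H₁ ⊆ RBset B a →
      ∀ α : ℝ, 0 < α → α < 1 →
        ∃ K Γ : ℝ, 0 ≤ Γ ∧ Γ ≤ 1 ∧
          IsUMP (condorcet φ n) (Rtop a) H₁ α (wTestT n B a K Γ)) := by
  constructor
  · constructor
    · intro hUMP
      obtain ⟨V₀, hV₀⟩ := hne
      refine ⟨Finset.univ.filter (fun b => V₀.1 b a = true), notmem_of_filter rfl, ?_⟩
      intro V hV
      show Finset.univ.filter (fun b => V.1 b a = true)
        = Finset.univ.filter (fun b => V₀.1 b a = true)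
      by_contra hdiff
      have hcases : ¬ (Finset.univ.filter (fun b => V.1 b a = true)
            ⊆ Finset.univ.filter (fun b => V₀.1 b a = true)) ∨
          ¬ (Finset.univ.filter (fun b => V₀.1 b a = true)
            ⊆ Finset.univ.filter (fun b => V.1 b a = true)) := by
        by_contra h
        push_neg at h
        exact hdiff (Finset.Subset.antisymm h.1 h.2)
      rcases hcases with h | h
      · obtain ⟨bs, hbs1, hbs2⟩ := Finset.not_subset.mp h
        exact key_contra hφ0 hφ1 hn a H₁ V V₀ hV hV₀ (hH₁ hV₀) bs hbs1 hbs2 hUMP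
      · obtain ⟨bs, hbs1, hbs2⟩ := Finset.not_subset.mp h
        exact key_contra hφ0 hφ1 hn a H₁ V₀ V hV₀ hV (hH₁ hV) bs hbs1 hbs2 hUMP
    · rintro ⟨B, _, hBsub⟩ α hα0 hα1
      obtain ⟨K, Γ, _, _, hump⟩ := part2 (n := n) hφ0 hφ1 (show 0 < n by omega) a H₁ B hBsub hα0 hα1
      exact ⟨wTestT n B a K Γ, hump⟩
  · intro B _ hBsub α hα0 hα1
    exact part2 (n := n) hφ0 hφ1 (show 0 < n by omega) a H₁ B hBsub hα0 hα1


end Voting
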